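/- Characterization of the zero-dissipation set (LaSalle invariance step in the proof of Lemma 1). Assume each f_i is strictly convex and differentiable, and L̄ is symmetric positive semidefinite. Let S* = (X*,Λ*,Z*) be an equilibrium point and let S = (X,Λ,Z) be a triple with x_i ∈ Ω_i for all i. If ⟨S - S*, J(S)⟩ = 0, then x_i = x*_i for all i and ∑_{j=1}^n L̄_{ij}(λ_j - λ*_j) = 0 for all i. -/

import Mathlib

open scoped BigOperators RealInnerProductSpace

lemma grad_strict_mono' {E : Type*} [NormedAddCommGroup E] [InnerProductSpace ℝ E]
    [CompleteSpace E]
    {f : E → ℝ} (hd : Differentiable ℝ f) (hc : StrictConvexOn ℝ Set.univ f)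
    {a b : E} (hab : a ≠ b) :
    0 < ⟪gradient f a - gradient f b, a - b⟫ := by
  set v := a - b with hv
  have hv0 : v ≠ 0 := sub_ne_zero.mpr hab
  set c : ℝ → E := fun t => b + t • v with hcdef
  have hderiv : ∀ t : ℝ, HasDerivAt (fun t => f (c t)) (⟪gradient f (c t), v⟫) t := by
    intro t
    have hc' : HasDerivAt c v t := by
      simpa [hcdef] using ((hasDerivAt_id t).smul_const v).const_add b
    have hf : HasFDerivAt f (fderiv ℝ f (c t)) (c t) := (hd (c t)).hasFDerivAt
    have h := hf.comp_hasDerivAt t hc'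
    refine h.congr_deriv ?_
    symm
    show ⟪gradient f (c t), v⟫ = fderiv ℝ f (c t) v
    rw [gradient]
    exact InnerProductSpace.toDual_symm_apply
  have hg : StrictConvexOn ℝ Set.univ (fun t => f (c t)) := by
    refine ⟨convex_univ, fun s _ t _ hst p q hp hq hpq => ?_⟩
    have hcs : c (p • s + q • t) = p • c s + q • c t := by
      simp only [hcdef, smul_eq_mul]
      match_scalars
      · linarith
      · ring
    have hne : c s ≠ c t := by
      intro h
      apply hst
      have : s • v = t • v := by
        simpa [hcdef] using h
      by_contra hst'
      exact hv0 (by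
        have := sub_eq_zero.mpr this
        rw [← sub_smul] at this
        rcases smul_eq_zero.mp this with h' | h'
        · exact absurd (sub_eq_zero.mp h') hst'
        · exact absurd h' hv0) |>.elim
    have := hc.2 (Set.mem_univ (c s)) (Set.mem_univ (c t)) hne hp hq hpq
    rw [← hcs] at this
    simpa using this
  have hmono := hg.strictMonoOn_deriv (fun t _ => (hderiv t).differentiableAt)
    (Set.mem_univ (0:ℝ)) (Set.mem_univ (1:ℝ)) one_pos
  rw [(hderiv 0).deriv, (hderiv 1).deriv] at hmono
  have hc0 : c 0 = b := by simp [hcdef]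
  have hc1 : c 1 = a := by simp [hcdef, hv]
  rw [hc0, hc1] at hmono
  rw [inner_sub_left]
  linarith

open Matrix in
/-- **Characterization of the zero-dissipation set** (LaSalle invariance step, Lemma 1).
Assume each `fᵢ` is strictly convex and differentiable and `L̄` is symmetric positive
semidefinite.  If `S* = (X*,Λ*,Z*)` is an equilibrium point, `S = (X,Λ,Z)` has `xᵢ ∈ Ωᵢ`,
and `⟨S - S*, J(S)⟩ = 0` (written out blockwise), then `xᵢ = x*ᵢ` for all `i` and
`∑ⱼ L̄ᵢⱼ (λⱼ - λ*ⱼ) = 0` for all `i`. -/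
theorem zero_dissipation_set_characterization
    (n m : ℕ) (hn : 0 < n)
    (f : Fin n → EuclideanSpace ℝ (Fin m) → ℝ)
    (hdiff : ∀ i, Differentiable ℝ (f i))
    (hsconv : ∀ i, StrictConvexOn ℝ Set.univ (f i))
    (Ω : Fin n → Set (EuclideanSpace ℝ (Fin m)))
    (hΩne : ∀ i, (Ω i).Nonempty) (hΩcl : ∀ i, IsClosed (Ω i))
    (hΩconv : ∀ i, Convex ℝ (Ω i))
    (d : Fin n → EuclideanSpace ℝ (Fin m))
    (Lbar : Matrix (Fin n) (Fin n) ℝ) (hpsd : Lbar.PosSemidef)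
    -- the equilibrium point S* = (X*, Λ*, Z*)
    (xs lams zs : Fin n → EuclideanSpace ℝ (Fin m))
    (heq_mem : ∀ i, xs i ∈ Ω i)
    (heq_nc : ∀ i, ∀ y ∈ Ω i, ⟪lams i - gradient (f i) (xs i), y - xs i⟫ ≤ 0)
    (heq_lam : ∀ i, ∑ j, Lbar i j • (lams j + zs j) = d i - xs i)
    (heq_z : ∀ i, ∑ j, Lbar i j • lams j = 0)
    -- a triple S = (X, Λ, Z) with xᵢ ∈ Ωᵢ and zero dissipation
    (x lam z : Fin n → EuclideanSpace ℝ (Fin m))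
    (hx_mem : ∀ i, x i ∈ Ω i)
    (hzero : ∑ i, (⟪x i - xs i, -gradient (f i) (x i) + lam i⟫
        + ⟪lam i - lams i, d i - x i - ∑ j, Lbar i j • (lam j + z j)⟫
        + ⟪z i - zs i, ∑ j, Lbar i j • lam j⟫) = 0) :
    (∀ i, x i = xs i) ∧ ∀ i, ∑ j, Lbar i j • (lam j - lams j) = 0 := by
  set p : Fin n → EuclideanSpace ℝ (Fin m) := fun i => lam i - lams i with hp
  set w : Fin n → EuclideanSpace ℝ (Fin m) := fun i => z i - zs i with hw
  have hsym : ∀ i j, Lbar i j = Lbar j i := by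
    intro i j
    have h := congrFun (congrFun hpsd.1 j) i
    simpa [Matrix.conjTranspose_apply] using h
  have h2 : ∀ i, d i - x i - ∑ j, Lbar i j • (lam j + z j)
      = -(x i - xs i) - ∑ j, Lbar i j • (p j + w j) := by
    intro i
    have hsum : ∑ j, Lbar i j • (p j + w j)
        = ∑ j, Lbar i j • (lam j + z j) - ∑ j, Lbar i j • (lams j + zs j) := by
      rw [← Finset.sum_sub_distrib]
      refine Finset.sum_congr rfl fun j _ => ?_
      simp only [hp, hw, smul_add, smul_sub]
      abel
    rw [hsum, heq_lam i]
    abel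
  have h3 : ∀ i, (∑ j, Lbar i j • lam j) = ∑ j, Lbar i j • p j := by
    intro i
    have h : ∑ j, Lbar i j • p j = ∑ j, Lbar i j • lam j - ∑ j, Lbar i j • lams j := by
      rw [← Finset.sum_sub_distrib]
      exact Finset.sum_congr rfl fun j _ => smul_sub _ _ _
    rw [h, heq_z i, sub_zero]
  simp only [h2, h3] at hzero
  have hexp : ∀ i, ⟪x i - xs i, -gradient (f i) (x i) + lam i⟫
      + ⟪p i, -(x i - xs i) - ∑ j, Lbar i j • (p j + w j)⟫
      + ⟪w i, ∑ j, Lbar i j • p j⟫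
      = ⟪lams i - gradient (f i) (x i), x i - xs i⟫
        - (∑ j, Lbar i j * ⟪p i, p j⟫)
        - (∑ j, Lbar i j * ⟪p i, w j⟫) + (∑ j, Lbar i j * ⟪w i, p j⟫) := by
    intro i
    have e1 : ⟪p i, ∑ j, Lbar i j • (p j + w j)⟫
        = (∑ j, Lbar i j * ⟪p i, p j⟫) + (∑ j, Lbar i j * ⟪p i, w j⟫) := by
      rw [inner_sum, ← Finset.sum_add_distrib]
      refine Finset.sum_congr rfl fun j _ => ?_
      rw [real_inner_smul_right, inner_add_right]
      ring
    have e2 : ⟪w i, ∑ j, Lbar i j • p j⟫ = ∑ j, Lbar i j * ⟪w i, p j⟫ := by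
      rw [inner_sum]
      exact Finset.sum_congr rfl fun j _ => real_inner_smul_right _ _ _
    have e3 : ⟪x i - xs i, -gradient (f i) (x i) + lam i⟫
        = ⟪lams i - gradient (f i) (x i), x i - xs i⟫ + ⟪p i, x i - xs i⟫ := by
      have c1 : ⟪x i - xs i, -gradient (f i) (x i) + lam i⟫
          = -⟪x i - xs i, gradient (f i) (x i)⟫ + ⟪x i - xs i, lam i⟫ := by
        rw [inner_add_right, inner_neg_right]
      have c2 : ⟪lams i - gradient (f i) (x i), x i - xs i⟫
          = ⟪lams i, x i - xs i⟫ - ⟪gradient (f i) (x i), x i - xs i⟫ :=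
        inner_sub_left _ _ _
      have c3 : ⟪p i, x i - xs i⟫ = ⟪lam i, x i - xs i⟫ - ⟪lams i, x i - xs i⟫ := by
        simp only [hp]
        exact inner_sub_left _ _ _
      rw [c1, c2, c3, real_inner_comm (x i - xs i) (gradient (f i) (x i)),
        real_inner_comm (x i - xs i) (lam i)]
      ring
    rw [inner_sub_right, e1, e2, e3, inner_neg_right]
    ring
  rw [Finset.sum_congr rfl fun i _ => hexp i] at hzero
  rw [Finset.sum_add_distrib, Finset.sum_sub_distrib, Finset.sum_sub_distrib] at hzero
  have hcross : ∑ i, ∑ j, Lbar i j * ⟪p i, w j⟫ = ∑ i, ∑ j, Lbar i j * ⟪w i, p j⟫ := by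
    rw [Finset.sum_comm]
    refine Finset.sum_congr rfl fun i _ => Finset.sum_congr rfl fun j _ => ?_
    rw [hsym j i, real_inner_comm]
  rw [hcross] at hzero
  have hmain : ∑ i, ⟪lams i - gradient (f i) (x i), x i - xs i⟫
      - ∑ i, ∑ j, Lbar i j * ⟪p i, p j⟫ = 0 := by linarith
  -- Q as coordinatewise PSD quadratic forms
  have hinner : ∀ (a b : Fin n), (⟪p a, p b⟫ : ℝ) = ∑ k, p a k * p b k := by
    intro a b
    simp [PiLp.inner_apply, RCLike.inner_apply, mul_comm]
  have hQcoord : (∑ i, ∑ j, Lbar i j * ⟪p i, p j⟫)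
      = ∑ k : Fin m, ((fun i => p i k) ⬝ᵥ (Lbar *ᵥ (fun i => p i k))) := by
    calc ∑ i, ∑ j, Lbar i j * ⟪p i, p j⟫
        = ∑ i, ∑ j, ∑ k, Lbar i j * (p i k * p j k) := by
          simp_rw [hinner, Finset.mul_sum]
      _ = ∑ i, ∑ k, ∑ j, Lbar i j * (p i k * p j k) := by
          exact Finset.sum_congr rfl fun i _ => Finset.sum_comm
      _ = ∑ k, ∑ i, ∑ j, Lbar i j * (p i k * p j k) := Finset.sum_comm
      _ = ∑ k : Fin m, ((fun i => p i k) ⬝ᵥ (Lbar *ᵥ (fun i => p i k))) := by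
          refine Finset.sum_congr rfl fun k _ => ?_
          simp only [dotProduct, Matrix.mulVec, Finset.mul_sum]
          exact Finset.sum_congr rfl fun i _ => Finset.sum_congr rfl fun j _ => by ring
  have hQnn : ∀ k : Fin m, 0 ≤ ((fun i => p i k) ⬝ᵥ (Lbar *ᵥ (fun i => p i k))) := by
    intro k
    simpa using hpsd.dotProduct_mulVec_nonneg (fun i => p i k)
  -- decompose the first sum
  have hdecomp : ∀ i, ⟪lams i - gradient (f i) (x i), x i - xs i⟫
      = ⟪lams i - gradient (f i) (xs i), x i - xs i⟫
        - ⟪gradient (f i) (x i) - gradient (f i) (xs i), x i - xs i⟫ := by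
    intro i
    simp only [inner_sub_left]
    ring
  have hB : ∀ i, 0 ≤ ⟪gradient (f i) (x i) - gradient (f i) (xs i), x i - xs i⟫ := by
    intro i
    rcases eq_or_ne (x i) (xs i) with h | h
    · simp [h]
    · exact le_of_lt (grad_strict_mono' (hdiff i) (hsconv i) h)
  have hA : ∀ i, ⟪lams i - gradient (f i) (xs i), x i - xs i⟫ ≤ 0 :=
    fun i => heq_nc i (x i) (hx_mem i)
  simp only [hdecomp] at hmain
  rw [Finset.sum_sub_distrib, hQcoord] at hmain
  have hSA : ∑ i, ⟪lams i - gradient (f i) (xs i), x i - xs i⟫ ≤ 0 :=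
    Finset.sum_nonpos fun i _ => hA i
  have hSB : 0 ≤ ∑ i, ⟪gradient (f i) (x i) - gradient (f i) (xs i), x i - xs i⟫ :=
    Finset.sum_nonneg fun i _ => hB i
  have hSQ : 0 ≤ ∑ k : Fin m, ((fun i => p i k) ⬝ᵥ (Lbar *ᵥ (fun i => p i k))) :=
    Finset.sum_nonneg fun k _ => hQnn k
  have hSB0 : ∑ i, ⟪gradient (f i) (x i) - gradient (f i) (xs i), x i - xs i⟫ = 0 := by
    linarith
  have hSQ0 : ∑ k : Fin m, ((fun i => p i k) ⬝ᵥ (Lbar *ᵥ (fun i => p i k))) = 0 := by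
    linarith
  constructor
  · intro i
    by_contra h
    have hBi : 0 < ⟪gradient (f i) (x i) - gradient (f i) (xs i), x i - xs i⟫ :=
      grad_strict_mono' (hdiff i) (hsconv i) h
    have := (Finset.sum_eq_zero_iff_of_nonneg (fun i _ => hB i)).mp hSB0 i (Finset.mem_univ i)
    linarith
  · intro i
    have hk : ∀ k : Fin m, Lbar *ᵥ (fun i => p i k) = 0 := by
      intro k
      have h0 := (Finset.sum_eq_zero_iff_of_nonneg (fun k _ => hQnn k)).mp hSQ0 k
        (Finset.mem_univ k)
      have := (hpsd.dotProduct_mulVec_zero_iff (fun i => p i k)).mp (by simpa using h0)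
      exact this
    ext k
    have h := congrFun (hk k) i
    rw [WithLp.ofLp_sum, Finset.sum_apply]
    simpa [Matrix.mulVec, dotProduct, hp, smul_eq_mul] using h
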